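/- arXiv:2604.04396 — 2 statements merged into one kernel-verified Lean document; each statement's English description precedes it below -/
import Mathlib

section
/- Let (·,·): F × F → ℚ(q) be the unique bilinear form on the free superalgebra F satisfying (1,1)=1, (a_{il}, a_{jk}) = δ_{ij}δ_{lk}(1-(-1)^{p(li)} q_i^{2l})^{-1}, (x, yy') = (ϱ(x), y⊗y'), and (xx', y) = (x⊗x', ϱ(y)). Then for all x, x' ∈ F one has (σ(x), σ(x')) = (x, x'), where σ is the anti-automorphism fixing the generators. -/
open scoped BigOperators

noncomputable section

/-- The base field `ℚ(q)`. -/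
abbrev K : Type := RatFunc ℚ

/-- The indeterminate `q`. -/
def qq : K := RatFunc.X

/-- Words in the generators `a_{il}`, `(i,l) ∈ I^∞ = I × ℤ_{>0}`. -/
abbrev Word (I : Type) := FreeMonoid (I × ℕ+)

/-- The parity of a word: the sum of the parities `l·p(i)` of its letters. -/
def wP {I : Type} (p : I → ℕ) (w : Word I) : ℕ :=
  ((FreeMonoid.toList w).map fun a => (a.2 : ℕ) * p a.1).sum

/-- The pairing `(|w|, |w'|)` of the weights of two words, where the letter
`(i,l)` has weight `l·α_i` and `(α_i, α_j) = B i j`. -/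
def wB {I : Type} (B : I → I → ℤ) (w w' : Word I) : ℤ :=
  ((FreeMonoid.toList w).map fun a =>
    (((FreeMonoid.toList w').map fun b => (a.2 : ℤ) * (b.2 : ℤ) * B a.1 b.1)).sum).sum

/-- The weight of a word in the root lattice `Q = ⊕ ℤα_i`. -/
def wWt {I : Type} (w : Word I) : I →₀ ℤ :=
  ((FreeMonoid.toList w).map fun a => Finsupp.single a.1 (a.2 : ℤ)).sum

/-- The free associative `ℚ(q)`-superalgebra `F` on the generators `a_{il}`. -/
abbrev F (I : Type) := MonoidAlgebra K (Word I)

/-- The underlying vector space of `F ⊗ F`, with basis the pairs of words. -/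
abbrev M (I : Type) := (Word I × Word I) →₀ K

/-- The basis element of `F` corresponding to a word. -/
def toF {I : Type} (w : Word I) : F I := MonoidAlgebra.single w 1

/-- The generator `a_{il}` of `F`. -/
def gen {I : Type} (i : I) (l : ℕ+) : F I := toF (FreeMonoid.of (i, l))

/-- The twisted multiplication on `F ⊗ F`:
`(x₁⊗x₂)(x₃⊗x₄) = (-1)^{p(x₂)p(x₃)} q^{(|x₂|,|x₃|)} x₁x₃ ⊗ x₂x₄`. -/
def twmul {I : Type} (p : I → ℕ) (B : I → I → ℤ) (f g : M I) : M I :=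
  f.sum fun a ca => g.sum fun b cb =>
    Finsupp.single (a.1 * b.1, a.2 * b.2)
      (ca * cb * (-1 : K) ^ (wP p a.2 * wP p b.1) * qq ^ (wB B a.2 b.1))

/-- Word reversal. -/
def wrev {I : Type} (w : Word I) : Word I :=
  FreeMonoid.ofList (FreeMonoid.toList w).reverse

/-- The anti-automorphism `σ` of `F` fixing each generator `a_{il}`:
it reverses every word. -/
def sigmaF {I : Type} : F I → F I := MonoidAlgebra.mapDomain wrev


/-! ### Auxiliary lemmas -/

section Aux

variable {I : Type}

theorem wrev_one : wrev (1 : Word I) = 1 := rfl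

theorem wrev_of (a : I × ℕ+) : wrev (FreeMonoid.of a) = FreeMonoid.of a := rfl

theorem wrev_mul (u v : Word I) : wrev (u * v) = wrev v * wrev u := by
  simp [wrev, FreeMonoid.toList_mul, List.reverse_append]

theorem wP_wrev (p : I → ℕ) (w : Word I) : wP p (wrev w) = wP p w := by
  simp [wP, wrev, List.map_reverse, List.sum_reverse]

theorem list_sum_swap {α β : Type} (f : α → β → ℤ) (l : List α) (l' : List β) :
    (l.map fun a => (l'.map fun b => f a b).sum).sum
      = (l'.map fun b => (l.map fun a => f a b).sum).sum := by
  induction l with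
  | nil => simp
  | cons a t ih => simp [ih, List.sum_map_add]

theorem wB_rev_rev (B : I → I → ℤ) (hB : ∀ i j, B i j = B j i) (u v : Word I) :
    wB B (wrev v) (wrev u) = wB B u v := by
  simp only [wB, wrev, FreeMonoid.toList_ofList, List.map_reverse, List.sum_reverse]
  rw [list_sum_swap]
  congr 1; apply List.map_congr_left; intro a _; congr 1
  apply List.map_congr_left; intro b _; rw [hB]; ring

theorem toF_mul (u v : Word I) : toF (u * v) = toF u * toF v := by
  simp [toF, MonoidAlgebra.single_mul_single]

theorem toF_one : toF (1 : Word I) = 1 := rfl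

theorem toF_of_eq_gen (a : I × ℕ+) : toF (FreeMonoid.of a) = gen a.1 a.2 := rfl

/-- The flip-and-reverse map on `M I`. -/
def Psi {I : Type} : M I → M I :=
  Finsupp.mapDomain (fun ab : Word I × Word I => (wrev ab.2, wrev ab.1))

theorem Psi_single (ab : Word I × Word I) (c : K) :
    Psi (Finsupp.single ab c) = Finsupp.single (wrev ab.2, wrev ab.1) c := by
  simp [Psi, Finsupp.mapDomain_single]

theorem Psi_sum {N : Type} [AddCommMonoid N] (f : M I) (h : Word I × Word I → K → N)
    (h0 : ∀ ab, h ab 0 = 0) (hadd : ∀ ab c1 c2, h ab (c1 + c2) = h ab c1 + h ab c2) :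
    (Psi f).sum h = f.sum fun ab c => h (wrev ab.2, wrev ab.1) c :=
  Finsupp.sum_mapDomain_index h0 hadd

theorem Psi_twmul (p : I → ℕ) (B : I → I → ℤ) (hB : ∀ i j, B i j = B j i) (f g : M I) :
    Psi (twmul p B f g) = twmul p B (Psi g) (Psi f) := by
  have e1 : Psi (twmul p B f g)
      = f.sum fun a ca => g.sum fun b cb =>
        Finsupp.single (wrev (a.2 * b.2), wrev (a.1 * b.1))
          (ca * cb * (-1 : K) ^ (wP p a.2 * wP p b.1) * qq ^ (wB B a.2 b.1)) := by
    unfold twmul Psi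
    rw [← Finsupp.mapDomain.addMonoidHom_apply, map_finsuppSum]
    refine Finsupp.sum_congr fun a _ => ?_
    rw [map_finsuppSum]
    refine Finsupp.sum_congr fun b _ => ?_
    simp only [Finsupp.mapDomain.addMonoidHom_apply, Finsupp.mapDomain_single]
  have e2 : twmul p B (Psi g) (Psi f)
      = g.sum fun b cb => f.sum fun a ca =>
        Finsupp.single (wrev b.2 * wrev a.2, wrev b.1 * wrev a.1)
          (cb * ca * (-1 : K) ^ (wP p (wrev b.1) * wP p (wrev a.2))
            * qq ^ (wB B (wrev b.1) (wrev a.2))) := by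
    unfold twmul Psi
    rw [Finsupp.sum_mapDomain_index]
    · refine Finsupp.sum_congr fun b _ => ?_
      rw [Finsupp.sum_mapDomain_index]
      · intro a; simp
      · intro a c1 c2
        rw [← Finsupp.single_add]
        congr 1; ring
    · intro b; simp [Finsupp.sum_fun_zero]
    · intro b c1 c2
      rw [← Finsupp.sum_add]
      refine Finsupp.sum_congr fun a _ => ?_
      rw [← Finsupp.single_add]
      congr 1; ring
  rw [e1, e2, Finsupp.sum_comm]
  refine Finsupp.sum_congr fun b _ => Finsupp.sum_congr fun a _ => ?_
  rw [wrev_mul, wrev_mul, wP_wrev, wP_wrev, wB_rev_rev B hB]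
  congr 1
  rw [Nat.mul_comm (wP p b.1) (wP p a.2)]
  ring

theorem Psi_rho_gen (a : I × ℕ+) :
    Psi ((Finsupp.single (FreeMonoid.of a, (1 : Word I)) (1 : K))
        + Finsupp.single ((1 : Word I), FreeMonoid.of a) 1)
      = Finsupp.single (FreeMonoid.of a, (1 : Word I)) (1 : K)
        + Finsupp.single ((1 : Word I), FreeMonoid.of a) 1 := by
  unfold Psi
  rw [Finsupp.mapDomain_add, Finsupp.mapDomain_single, Finsupp.mapDomain_single]
  simp only [wrev_of, wrev_one]
  exact add_comm _ _

theorem rho_sigma (p : I → ℕ) (B : I → I → ℤ) (hB : ∀ i j, B i j = B j i)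
    (rho : F I →ₗ[K] M I)
    (hrho1 : rho 1 = Finsupp.single (1, 1) 1)
    (hrhomul : ∀ x y : F I, rho (x * y) = twmul p B (rho x) (rho y))
    (hrhogen : ∀ (i : I) (l : ℕ+),
      rho (gen i l) = Finsupp.single (FreeMonoid.of (i, l), 1) 1
        + Finsupp.single (1, FreeMonoid.of (i, l)) 1)
    (w : Word I) : rho (toF (wrev w)) = Psi (rho (toF w)) := by
  suffices h : ∀ l : List (I × ℕ+),
      rho (toF (wrev (FreeMonoid.ofList l))) = Psi (rho (toF (FreeMonoid.ofList l))) by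
    have := h (FreeMonoid.toList w)
    rwa [FreeMonoid.ofList_toList] at this
  intro l
  induction l with
  | nil =>
      show rho (toF (wrev 1)) = Psi (rho (toF 1))
      rw [wrev_one, toF_one, hrho1, Psi_single, wrev_one]
  | cons a t ih =>
      rw [FreeMonoid.ofList_cons, wrev_mul, wrev_of, toF_mul, toF_mul, toF_of_eq_gen,
        hrhomul, hrhomul, ih, Psi_twmul p B hB, hrhogen, Psi_rho_gen (a.1, a.2)]

theorem sigmaF_zero : sigmaF (0 : F I) = 0 := MonoidAlgebra.mapDomain_zero _

theorem sigmaF_add (f g : F I) : sigmaF (f + g) = sigmaF f + sigmaF g :=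
  MonoidAlgebra.mapDomain_add _ _ _

theorem sigmaF_single (w : Word I) (c : K) :
    sigmaF (MonoidAlgebra.single w c : F I) = MonoidAlgebra.single (wrev w) c :=
  MonoidAlgebra.mapDomain_single

end Aux

/-- Lusztig's bilinear form on `F` is invariant under the anti-automorphism `σ`:
`(σ(x), σ(x')) = (x, x')`. -/
theorem bilinear_sigma_invariant {I : Type} [DecidableEq I]
    (p : I → ℕ) (d : I → ℕ+) (B : I → I → ℤ) (hB : ∀ i j, B i j = B j i)
    (rho : F I →ₗ[K] M I)
    (hrho1 : rho 1 = Finsupp.single (1, 1) 1)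
    (hrhomul : ∀ x y : F I, rho (x * y) = twmul p B (rho x) (rho y))
    (hrhogen : ∀ (i : I) (l : ℕ+),
      rho (gen i l) = Finsupp.single (FreeMonoid.of (i, l), 1) 1
        + Finsupp.single (1, FreeMonoid.of (i, l)) 1)
    (Bf : F I →ₗ[K] F I →ₗ[K] K)
    (h11 : Bf 1 1 = 1)
    (hgen : ∀ (i : I) (l : ℕ+) (j : I) (k : ℕ+),
      Bf (gen i l) (gen j k) =
        if i = j ∧ l = k then
          (1 - (-1 : K) ^ ((l : ℕ) * p i) * qq ^ (2 * (l : ℕ) * (d i : ℕ)))⁻¹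
        else 0)
    (hR : ∀ x y y' : F I,
      Bf x (y * y') = (rho x).sum fun ab c => c * Bf (toF ab.1) y * Bf (toF ab.2) y')
    (hL : ∀ x x' y : F I,
      Bf (x * x') y = (rho y).sum fun ab c => c * Bf x (toF ab.1) * Bf x' (toF ab.2))
    (x x' : F I) :
    Bf (sigmaF x) (sigmaF x') = Bf x x' := by
  -- (gen i l, 1) = 0
  have hBf_gen_one : ∀ (i : I) (l : ℕ+), Bf (gen i l) 1 = 0 := by
    intro i l
    have h := hR (gen i l) 1 1
    rw [mul_one, hrhogen] at h
    rw [Finsupp.sum_add_index' (by intro ab; simp) (by intro ab c1 c2; ring),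
      Finsupp.sum_single_index (by simp), Finsupp.sum_single_index (by simp),
      toF_one, toF_of_eq_gen, h11] at h
    linear_combination -h
  -- (w, 1) = 0 for nonempty w
  have hBf_toF_one : ∀ w : Word I, FreeMonoid.toList w ≠ [] → Bf (toF w) 1 = 0 := by
    intro w hw
    rcases h : FreeMonoid.toList w with _ | ⟨z, u⟩
    · exact absurd h hw
    · have hwx : toF w = gen z.1 z.2 * toF (FreeMonoid.ofList u) := by
        conv_lhs => rw [← FreeMonoid.ofList_toList w, h]
        rw [FreeMonoid.ofList_cons, toF_mul, toF_of_eq_gen]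
      rw [hwx, hL, hrho1, Finsupp.sum_single_index (by simp), toF_one, hBf_gen_one]
      ring
  -- (w, gen j k) = 0 for words of length ≥ 2
  have hzero : ∀ (j : I) (k : ℕ+) (v : Word I), 2 ≤ (FreeMonoid.toList v).length →
      Bf (toF v) (gen j k) = 0 := by
    intro j k v hv
    rcases h : FreeMonoid.toList v with _ | ⟨z, u⟩
    · rw [h] at hv; simp at hv
    · have hu : u ≠ [] := by
        intro hu; rw [h, hu] at hv; simp at hv
      have hwx : toF v = gen z.1 z.2 * toF (FreeMonoid.ofList u) := by
        conv_lhs => rw [← FreeMonoid.ofList_toList v, h]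
        rw [FreeMonoid.ofList_cons, toF_mul, toF_of_eq_gen]
      rw [hwx, hL, hrhogen]
      rw [Finsupp.sum_add_index' (by intro ab; simp) (by intro ab c1 c2; ring),
        Finsupp.sum_single_index (by simp), Finsupp.sum_single_index (by simp), toF_one,
        hBf_gen_one, hBf_toF_one (FreeMonoid.ofList u) (by simpa using hu)]
      ring
  -- (σ w, gen j k) = (w, gen j k)
  have hpair : ∀ (w : Word I) (j : I) (k : ℕ+),
      Bf (toF (wrev w)) (gen j k) = Bf (toF w) (gen j k) := by
    intro w j k
    rcases h : FreeMonoid.toList w with _ | ⟨z, u⟩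
    · have hw1 : w = 1 := by rw [← FreeMonoid.ofList_toList w, h]; rfl
      rw [hw1, wrev_one]
    · rcases u with _ | ⟨y, s⟩
      · have hwx : w = FreeMonoid.of z := by rw [← FreeMonoid.ofList_toList w, h]; rfl
        rw [hwx, wrev_of]
      · have h2 : 2 ≤ (FreeMonoid.toList w).length := by rw [h]; simp
        have h2' : 2 ≤ (FreeMonoid.toList (wrev w)).length := by
          simp only [wrev, FreeMonoid.toList_ofList, List.length_reverse]
          exact h2
        rw [hzero j k w h2, hzero j k (wrev w) h2']
  -- ρ ∘ σ = Ψ ∘ ρ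
  have hsig : ∀ w : Word I, rho (toF (wrev w)) = Psi (rho (toF w)) :=
    rho_sigma p B hB rho hrho1 hrhomul hrhogen
  -- the key statement on words
  have key : ∀ (l' : List (I × ℕ+)) (w : Word I),
      Bf (toF (wrev w)) (toF (wrev (FreeMonoid.ofList l')))
        = Bf (toF w) (toF (FreeMonoid.ofList l')) := by
    intro l'
    induction l' with
    | nil =>
        intro w
        show Bf (toF (wrev w)) 1 = Bf (toF w) 1
        by_cases hw : FreeMonoid.toList w = []
        · have hw1 : w = 1 := by rw [← FreeMonoid.ofList_toList w, hw]; rfl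
          rw [hw1, wrev_one]
        · rw [hBf_toF_one w hw, hBf_toF_one (wrev w) (by
            simp only [wrev, FreeMonoid.toList_ofList, ne_eq, List.reverse_eq_nil_iff]
            exact hw)]
    | cons a t ih =>
        intro w
        have e1 : toF (FreeMonoid.ofList (a :: t)) = gen a.1 a.2 * toF (FreeMonoid.ofList t) := by
          rw [FreeMonoid.ofList_cons, toF_mul, toF_of_eq_gen]
        have e2 : toF (wrev (FreeMonoid.ofList (a :: t)))
            = toF (wrev (FreeMonoid.ofList t)) * gen a.1 a.2 := by
          rw [FreeMonoid.ofList_cons, wrev_mul, wrev_of, toF_mul, toF_of_eq_gen]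
        rw [e1, e2, hR, hR, hsig w,
          Psi_sum (rho (toF w)) _ (by intro ab; ring) (by intro ab c1 c2; ring)]
        refine Finsupp.sum_congr fun ab _ => ?_
        rw [ih ab.2, hpair ab.1 a.1 a.2]
        ring
  have main : ∀ w w' : Word I,
      Bf (toF (wrev w)) (toF (wrev w')) = Bf (toF w) (toF w') := fun w w' =>
    key (FreeMonoid.toList w') w
  -- single with coefficient
  have hsingle : ∀ (w : Word I) (c : K),
      (MonoidAlgebra.single w c : F I) = c • toF w := by
    intro w c
    rw [toF, MonoidAlgebra.smul_single', mul_one]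
  -- conclude by bilinearity
  induction x using MonoidAlgebra.induction_linear with
  | zero => simp [sigmaF_zero]
  | add f g hf hg => rw [sigmaF_add]; simp [hf, hg]
  | single w c =>
      induction x' using MonoidAlgebra.induction_linear with
      | zero => simp [sigmaF_zero]
      | add f g hf hg => rw [sigmaF_add]; simp [hf, hg]
      | single w' c' =>
          rw [sigmaF_single, sigmaF_single, hsingle w c, hsingle w' c',
            hsingle (wrev w) c, hsingle (wrev w') c']
          set_option synthInstance.maxHeartbeats 1000000 in
          simp only [map_smul, LinearMap.smul_apply, smul_eq_mul]
          rw [main w w']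
end
end

section
/- Let V = U_q(g)·v_λ be a highest weight module in the category O_int over the quantum Borcherds-Bozec superalgebra, with highest weight λ ∈ P. If i is a real index (a_{ii}=2), then ⟨h_i, λ⟩ ≥ 0, and moreover if i is odd (p(i)=1) then ⟨h_i, λ⟩ is even; consequently λ ∈ P⁺. -/
open scoped BigOperators

noncomputable section

lemma qq_ne_zero : qq ≠ 0 := RatFunc.X_ne_zero

lemma qq_zpow_intDegree (z : ℤ) : (qq ^ z).intDegree = z := by
  have hq := qq_ne_zero
  have hnat : ∀ m : ℕ, (qq ^ (m : ℤ)).intDegree = m := by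
    intro m
    induction m with
    | zero => simpa using RatFunc.intDegree_one
    | succ k ih =>
      have h1 : qq ^ ((k : ℤ) + 1) = qq ^ (k : ℤ) * qq := by
        rw [zpow_add₀ hq, zpow_one]
      rw [show ((k+1 : ℕ) : ℤ) = (k : ℤ) + 1 by push_cast; ring, h1,
        RatFunc.intDegree_mul (zpow_ne_zero _ hq) hq, ih]
      have : (qq).intDegree = 1 := RatFunc.intDegree_X
      omega
  rcases le_or_gt 0 z with hz | hz
  · obtain ⟨m, rfl⟩ := Int.eq_ofNat_of_zero_le hz
    exact hnat m
  · obtain ⟨m, rfl⟩ : ∃ m : ℕ, z = -(m : ℤ) := ⟨z.natAbs, by omega⟩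
    have h1 : qq ^ (-(m : ℤ)) * qq ^ (m : ℤ) = 1 := by
      rw [← zpow_add₀ hq]; simp
    have h2 := RatFunc.intDegree_mul (x := qq ^ (-(m:ℤ))) (y := qq ^ (m:ℤ))
      (zpow_ne_zero _ hq) (zpow_ne_zero _ hq)
    rw [h1, RatFunc.intDegree_one, hnat m] at h2
    omega

lemma qq_zpow_eq_one {z : ℤ} (h : qq ^ z = 1) : z = 0 := by
  have := qq_zpow_intDegree z
  rw [h, RatFunc.intDegree_one] at this; omega

lemma qq_zpow_ne_neg_one (z : ℤ) : qq ^ z ≠ -1 := by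
  intro h
  have hm1 : (-1 : K) ≠ 0 := by norm_num
  have h2 := RatFunc.intDegree_mul (x := (-1:K)) (y := (-1:K)) hm1 hm1
  rw [show (-1 : K) * (-1) = 1 by ring, RatFunc.intDegree_one] at h2
  have h3 := qq_zpow_intDegree z
  rw [h] at h3
  have hz : z = 0 := by omega
  rw [hz, zpow_zero] at h
  have h4 : (2 : K) = 0 := by linear_combination h
  have h5 : (algebraMap ℚ K) 2 = (algebraMap ℚ K) 0 := by simpa using h4
  exact absurd ((algebraMap ℚ K).injective h5) (by norm_num)

lemma qq_zpow_inj {y z : ℤ} (h : qq ^ y = qq ^ z) : y = z := by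
  have h1 : qq ^ (y - z) = 1 := by
    rw [zpow_sub₀ qq_ne_zero, h, div_self (zpow_ne_zero _ qq_ne_zero)]
  have := qq_zpow_eq_one h1
  omega

lemma qq_zpow_ne_neg_zpow (y z : ℤ) : qq ^ y ≠ -qq ^ z := by
  intro h
  have h1 : qq ^ (y - z) = -1 := by
    rw [zpow_sub₀ qq_ne_zero, h, neg_div, div_self (zpow_ne_zero _ qq_ne_zero)]
  exact qq_zpow_ne_neg_one _ h1

/-- The super quantum integer `[m]` at parameter `Q` and parity `pi`. -/
def sInt (pi : ℕ) (Q : K) (m : ℕ) : K :=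
  (((-1) ^ pi * Q) ^ m - Q⁻¹ ^ m) / ((-1) ^ pi * Q - Q⁻¹)

/-- The super quantum factorial `[n]!`. -/
def sFact (pi : ℕ) (Q : K) (n : ℕ) : K := ∏ s ∈ Finset.range n, sInt pi Q (s + 1)

/-- The super quantum binomial coefficient `[n; t] = [n]!/([t]![n-t]!)`. -/
def sBinom (pi : ℕ) (Q : K) (n t : ℕ) : K :=
  sFact pi Q n / (sFact pi Q t * sFact pi Q (n - t))

/-- Generators of the quantum Borcherds--Bozec superalgebra: `a_{il}`, `b_{il}`
for `(i,l) ∈ I^∞`, and `q^h` for `h` in the dual weight lattice `H = P^∨`. -/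
inductive Gen (I H : Type) where
  | a : I → ℕ+ → Gen I H
  | b : I → ℕ+ → Gen I H
  | k : H → Gen I H

/-- The free `ℚ(q)`-algebra on the generators. -/
abbrev FA (I H : Type) := FreeAlgebra K (Gen I H)

/-- The generator `a_{il}`. -/
def Ag {I H : Type} (i : I) (l : ℕ+) : FA I H := FreeAlgebra.ι K (Gen.a i l)

/-- The generator `b_{il}`. -/
def Bg {I H : Type} (i : I) (l : ℕ+) : FA I H := FreeAlgebra.ι K (Gen.b i l)

/-- The generator `q^h`. -/
def Kg {I : Type} {H : Type} (h : H) : FA I H := FreeAlgebra.ι K (Gen.k h)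

/-- `q_i = q^{d_i}`. -/
def qi {I : Type} (d : I → ℕ+) (i : I) : K := qq ^ (d i : ℕ)

/-- `N = 1 - k·a_{ij}` (a natural number when `a_{ij} ≤ 0`). -/
def serreN {I : Type} (a : I → I → ℤ) (i j : I) (k : ℕ+) : ℕ :=
  (1 - (k : ℤ) * a i j).toNat

/-- The defining relations of the quantum Borcherds--Bozec superalgebra
associated with the super Borcherds--Cartan datum `(a, p, d, hi, pair)`,
where `pair h i = ⟨h, α_i⟩` and `hi i = h_i`. -/
inductive QBBRel {I H : Type} [DecidableEq I] [AddCommGroup H]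
    (p : I → ℕ) (d : I → ℕ+) (a : I → I → ℤ) (hi : I → H) (pair : H → I → ℤ) :
    FA I H → FA I H → Prop where
  | kzero : QBBRel p d a hi pair (Kg (0 : H)) 1
  | kadd (h h' : H) : QBBRel p d a hi pair (Kg h * Kg h') (Kg (h + h'))
  | ka (h : H) (i : I) (l : ℕ+) :
      QBBRel p d a hi pair (Kg h * Ag i l * Kg (-h))
        ((qq ^ ((l : ℤ) * pair h i)) • Ag i l)
  | kb (h : H) (i : I) (l : ℕ+) :
      QBBRel p d a hi pair (Kg h * Bg i l * Kg (-h))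
        ((qq ^ (-((l : ℤ) * pair h i))) • Bg i l)
  | serreA (i j : I) (k : ℕ+) (hre : a i i = 2) (hne : ¬(j = i ∧ k = 1)) :
      QBBRel p d a hi pair
        (∑ t ∈ Finset.range (serreN a i j k + 1),
          ((-1 : K) ^ (serreN a i j k - t) *
            (-1 : K) ^ (p i * ((serreN a i j k - t) * ((k : ℕ) * p j) +
              Nat.choose (serreN a i j k - t) 2)) *
            sBinom (p i) (qi d i) (serreN a i j k) (serreN a i j k - t)) •
            (Ag i 1 ^ t * Ag j k * Ag i 1 ^ (serreN a i j k - t))) 0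
  | serreB (i j : I) (k : ℕ+) (hre : a i i = 2) (hne : ¬(j = i ∧ k = 1)) :
      QBBRel p d a hi pair
        (∑ t ∈ Finset.range (serreN a i j k + 1),
          ((-1 : K) ^ (serreN a i j k - t) *
            (-1 : K) ^ (p i * ((serreN a i j k - t) * ((k : ℕ) * p j) +
              Nat.choose (serreN a i j k - t) 2)) *
            sBinom (p i) (qi d i) (serreN a i j k) (serreN a i j k - t)) •
            (Bg i 1 ^ t * Bg j k * Bg i 1 ^ (serreN a i j k - t))) 0
  | commA (i j : I) (l k : ℕ+) (h0 : a i j = 0) :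
      QBBRel p d a hi pair (Ag i l * Ag j k)
        (((-1 : K) ^ (((l : ℕ) * p i) * ((k : ℕ) * p j))) • (Ag j k * Ag i l))
  | commB (i j : I) (l k : ℕ+) (h0 : a i j = 0) :
      QBBRel p d a hi pair (Bg i l * Bg j k)
        (((-1 : K) ^ (((l : ℕ) * p i) * ((k : ℕ) * p j))) • (Bg j k * Bg i l))
  | ab (i j : I) (l k : ℕ+) :
      QBBRel p d a hi pair
        (Ag i l * Bg j k -
          ((-1 : K) ^ (((l : ℕ) * p i) * ((k : ℕ) * p j))) • (Bg j k * Ag i l))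
        (if i = j ∧ l = k then
          ((1 - (-1 : K) ^ ((l : ℕ) * p i) * (qi d i) ^ (2 * (l : ℕ)))⁻¹) •
            (Kg (((l : ℤ) * (d i : ℤ)) • hi i) - Kg (-(((l : ℤ) * (d i : ℤ)) • hi i)))
        else 0)

/-- The quantum Borcherds--Bozec superalgebra `U_q(𝔤)`. -/
abbrev Uq {I H : Type} [DecidableEq I] [AddCommGroup H]
    (p : I → ℕ) (d : I → ℕ+) (a : I → I → ℤ) (hi : I → H) (pair : H → I → ℤ) : Type :=
  RingQuot (QBBRel p d a hi pair)

/-- The canonical map `FA I H → U_q(𝔤)`. -/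
abbrev mkU {I H : Type} [DecidableEq I] [AddCommGroup H]
    (p : I → ℕ) (d : I → ℕ+) (a : I → I → ℤ) (hi : I → H) (pair : H → I → ℤ) :
    FA I H →ₐ[K] Uq p d a hi pair :=
  RingQuot.mkAlgHom K (QBBRel p d a hi pair)

/-- If `V = U_q(𝔤)·v` is a highest weight module in the category `O_int` with
highest weight `λ`, then for every real index `i` (`a_{ii} = 2`) one has
`⟨h_i, λ⟩ ≥ 0`, and if moreover `p(i) = 1` then `⟨h_i, λ⟩` is even;
consequently `λ ∈ P⁺`. -/
theorem highest_weight_dominant {I H : Type} [DecidableEq I] [AddCommGroup H]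
    (p : I → ℕ) (d : I → ℕ+) (a : I → I → ℤ) (hi : I → H) (pair : H → I → ℤ)
    (hpair : ∀ i j, pair (hi i) j = a i j)
    -- Borcherds--Cartan condition: every index is real or imaginary:
    (hcartan : ∀ i : I, a i i = 2 ∨ a i i ≤ 0)
    (M : Type) [AddCommGroup M] [Module (Uq p d a hi pair) M]
    (lam : H →+ ℤ)
    (v : M) (hv0 : v ≠ 0)
    -- `v` is a highest weight vector of weight `λ` generating `M`:
    (hhwA : ∀ (i : I) (l : ℕ+), mkU p d a hi pair (Ag i l) • v = 0)
    (hhwK : ∀ h : H,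
      mkU p d a hi pair (Kg h) • v =
        (algebraMap K (Uq p d a hi pair) (qq ^ (lam h))) • v)
    (hcyc : ∀ m : M, ∃ u : Uq p d a hi pair, u • v = m)
    -- `M` lies in `O_int`: `b_i` is locally nilpotent for real `i`, and
    -- `⟨h_i, μ⟩ ≥ 0` for imaginary `i` and every weight `μ` (in particular `λ`):
    (hlocnil : ∀ i : I, a i i = 2 →
      ∀ m : M, ∃ r : ℕ, (mkU p d a hi pair (Bg i 1)) ^ r • m = 0)
    (him : ∀ i : I, a i i ≤ 0 → 0 ≤ lam (hi i)) :
    (∀ i : I, a i i = 2 → 0 ≤ lam (hi i) ∧ (p i = 1 → 2 ∣ lam (hi i))) ∧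
    -- `λ ∈ P⁺`:
    ((∀ i : I, 0 ≤ lam (hi i)) ∧
      (∀ i : I, a i i = 2 → p i = 1 → 2 ∣ lam (hi i))) := by
  classical
  have hq := qq_ne_zero
  have main : ∀ i : I, a i i = 2 → 0 ≤ lam (hi i) ∧ (p i = 1 → 2 ∣ lam (hi i)) := by
    intro i hre
    set U := Uq p d a hi pair with hU
    set Φ := mkU p d a hi pair with hPhi
    set n : ℤ := lam (hi i) with hn
    set dd : ℕ := (d i : ℕ) with hdd
    have hdd1 : 0 < dd := (d i).pos
    set B : U := Φ (Bg i 1) with hB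
    set A : U := Φ (Ag i 1) with hA
    set Kp : U := Φ (Kg (hi i)) with hKp
    set Km : U := Φ (Kg (-hi i)) with hKm
    -- scalar helpers
    have smulK : ∀ (c : K) (u : U) (m : M), (c • u) • m = algebraMap K U c • (u • m) := by
      intro c u m; rw [Algebra.smul_def, mul_smul]
    have φmul : ∀ (c c' : K) (m : M),
        algebraMap K U c • algebraMap K U c' • m = algebraMap K U (c * c') • m := by
      intro c c' m; rw [← mul_smul, ← map_mul]
    have φcomm : ∀ (c : K) (u : U) (m : M), u • (algebraMap K U c • m) = algebraMap K U c • (u • m) := by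
      intro c u m; rw [← mul_smul, ← Algebra.commutes, mul_smul]
    have φcancel : ∀ (c : K) (m : M), c ≠ 0 → algebraMap K U c • m = 0 → m = 0 := by
      intro c m hc h
      have h2 : algebraMap K U c⁻¹ • algebraMap K U c • m = 0 := by rw [h, smul_zero]
      rwa [φmul, inv_mul_cancel₀ hc, map_one, one_smul] at h2
    -- relations
    have hrel : ∀ {x y : FA I H}, QBBRel p d a hi pair x y → Φ x = Φ y := by
      intro x y hxy; exact RingQuot.mkAlgHom_rel K hxy
    have hPone : Φ 1 = 1 := map_one Φ
    have hK0 : Φ (Kg (0 : H)) = 1 := by rw [hrel QBBRel.kzero, hPone]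
    have hKadd : ∀ x y : H, Φ (Kg x) * Φ (Kg y) = Φ (Kg (x + y)) := by
      intro x y; rw [← map_mul, hrel (QBBRel.kadd x y)]
    have hKK : ∀ x : H, Φ (Kg x) * Φ (Kg (-x)) = 1 := by
      intro x; rw [hKadd, add_neg_cancel, hK0]
    have hKpow : ∀ (x : H) (m : ℕ), Φ (Kg ((m : ℤ) • x)) = Φ (Kg x) ^ m := by
      intro x m
      induction m with
      | zero => simpa using hK0
      | succ k ih =>
        have h1 : ((k + 1 : ℕ) : ℤ) • x = (k : ℤ) • x + x := by
          push_cast; rw [add_smul, one_smul]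
        rw [h1, ← hKadd, ih, pow_succ]
    have hKK2 : ∀ x : H, Φ (Kg (-x)) * Φ (Kg x) = 1 := by
      intro x; rw [hKadd, neg_add_cancel, hK0]
    -- K-B commutation
    have hKpB : Kp * B = (qq ^ (-2 : ℤ)) • (B * Kp) := by
      have h1 := hrel (QBBRel.kb (hi i) i 1)
      rw [map_smul, map_mul, map_mul] at h1
      rw [show -((((1:ℕ+) : ℤ)) * pair (hi i) i) = (-2 : ℤ) by rw [hpair, hre]; norm_num] at h1
      have h3 := congrArg (· * Φ (Kg (hi i))) h1
      simp only [smul_mul_assoc, mul_assoc] at h3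
      rw [hKK2 (hi i), mul_one] at h3
      exact h3
    -- weight computations
    have hwv : Kp • v = algebraMap K U (qq ^ n) • v := hhwK (hi i)
    have wtp : ∀ m : ℕ, Kp • ((B ^ m) • v) = algebraMap K U (qq ^ (n - 2 * (m : ℤ))) • ((B ^ m) • v) := by
      intro m
      induction m with
      | zero => simpa using hwv
      | succ k ih =>
        have hfs : (B ^ (k+1)) • v = B • ((B ^ k) • v) := by
          rw [pow_succ', mul_smul]
        calc Kp • (B ^ (k+1)) • v = (Kp * B) • ((B ^ k) • v) := by rw [hfs, ← mul_smul]
          _ = ((qq ^ (-2:ℤ)) • (B * Kp)) • ((B ^ k) • v) := by rw [hKpB]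
          _ = algebraMap K U (qq ^ (-2:ℤ)) • (B • (Kp • ((B ^ k) • v))) := by
              rw [smulK, mul_smul]
          _ = algebraMap K U (qq ^ (-2:ℤ)) • (algebraMap K U (qq ^ (n - 2 * (k:ℤ))) • (B • ((B ^ k) • v))) := by
              rw [ih, φcomm]
          _ = algebraMap K U (qq ^ (-2:ℤ) * qq ^ (n - 2 * (k:ℤ))) • ((B ^ (k+1)) • v) := by
              rw [φmul, hfs]
          _ = algebraMap K U (qq ^ (n - 2 * ((k+1 : ℕ) : ℤ))) • ((B ^ (k+1)) • v) := by
              rw [← zpow_add₀ hq]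
              congr 2
              push_cast; ring
    have wtm : ∀ m : ℕ, Km • ((B ^ m) • v) = algebraMap K U (qq ^ (2 * (m : ℤ) - n)) • ((B ^ m) • v) := by
      intro m
      have hc : qq ^ (n - 2*(m:ℤ)) ≠ 0 := zpow_ne_zero _ hq
      have h1 : (B ^ m) • v = algebraMap K U (qq ^ (n - 2*(m:ℤ)))⁻¹ • (Kp • ((B ^ m) • v)) := by
        rw [wtp m, φmul, inv_mul_cancel₀ hc, map_one, one_smul]
      calc Km • (B ^ m) • v
          = algebraMap K U (qq ^ (n - 2*(m:ℤ)))⁻¹ • ((Km * Kp) • ((B ^ m) • v)) := by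
            conv_lhs => rw [h1]
            rw [φcomm, mul_smul]
        _ = algebraMap K U (qq ^ (n - 2*(m:ℤ)))⁻¹ • ((B ^ m) • v) := by
            rw [show Km * Kp = 1 from hKK2 (hi i), one_smul]
        _ = algebraMap K U (qq ^ (2 * (m:ℤ) - n)) • ((B ^ m) • v) := by
            rw [← zpow_neg, show -(n - 2*(m:ℤ)) = 2*(m:ℤ) - n by ring]
    -- powers of Kp and Km
    have wtppow : ∀ (t m : ℕ), (Kp ^ t) • ((B ^ m) • v) =
        algebraMap K U (qq ^ ((t:ℤ) * (n - 2 * (m:ℤ)))) • ((B ^ m) • v) := by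
      intro t m
      induction t with
      | zero => simp
      | succ k ih =>
        calc (Kp ^ (k+1)) • ((B ^ m) • v) = Kp • ((Kp ^ k) • ((B ^ m) • v)) := by
              rw [pow_succ', mul_smul]
          _ = Kp • (algebraMap K U (qq ^ ((k:ℤ) * (n - 2 * (m:ℤ)))) • ((B ^ m) • v)) := by rw [ih]
          _ = algebraMap K U (qq ^ ((k:ℤ) * (n - 2 * (m:ℤ)))) • (Kp • ((B ^ m) • v)) := by rw [φcomm]
          _ = algebraMap K U (qq ^ ((k:ℤ) * (n - 2 * (m:ℤ))) * qq ^ (n - 2 * (m:ℤ))) • ((B ^ m) • v) := by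
              rw [wtp m, φmul]
          _ = algebraMap K U (qq ^ (((k+1:ℕ):ℤ) * (n - 2 * (m:ℤ)))) • ((B ^ m) • v) := by
              rw [← zpow_add₀ hq]; congr 2; push_cast; ring
    have wtmpow : ∀ (t m : ℕ), (Km ^ t) • ((B ^ m) • v) =
        algebraMap K U (qq ^ ((t:ℤ) * (2 * (m:ℤ) - n))) • ((B ^ m) • v) := by
      intro t m
      induction t with
      | zero => simp
      | succ k ih =>
        calc (Km ^ (k+1)) • ((B ^ m) • v) = Km • ((Km ^ k) • ((B ^ m) • v)) := by
              rw [pow_succ', mul_smul]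
          _ = Km • (algebraMap K U (qq ^ ((k:ℤ) * (2 * (m:ℤ) - n))) • ((B ^ m) • v)) := by rw [ih]
          _ = algebraMap K U (qq ^ ((k:ℤ) * (2 * (m:ℤ) - n))) • (Km • ((B ^ m) • v)) := by rw [φcomm]
          _ = algebraMap K U (qq ^ ((k:ℤ) * (2 * (m:ℤ) - n)) * qq ^ (2 * (m:ℤ) - n)) • ((B ^ m) • v) := by
              rw [wtm m, φmul]
          _ = algebraMap K U (qq ^ (((k+1:ℕ):ℤ) * (2 * (m:ℤ) - n))) • ((B ^ m) • v) := by
              rw [← zpow_add₀ hq]; congr 2; push_cast; ring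
    -- the sign and key scalars (opaque names, linked by equations)
    obtain ⟨ε, hεdef⟩ : ∃ x : K, x = (-1 : K) ^ (p i) := ⟨_, rfl⟩
    obtain ⟨Y, hYdef⟩ : ∃ x : K, x = qq ^ ((dd : ℕ) : ℤ) := ⟨_, rfl⟩
    obtain ⟨W, hWdef⟩ : ∃ x : K, x = qq ^ ((dd : ℤ) * n) := ⟨_, rfl⟩
    obtain ⟨DD, hDDdef⟩ : ∃ x : K, x = 1 - ε * Y ^ 2 := ⟨_, rfl⟩
    have hεε : ε * ε = 1 := by
      rw [hεdef, ← pow_add, ← two_mul, pow_mul]; norm_num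
    have hε0 : ε ≠ 0 := by rw [hεdef]; exact pow_ne_zero _ (by norm_num)
    have hY0 : Y ≠ 0 := by rw [hYdef]; exact zpow_ne_zero _ hq
    have hW0 : W ≠ 0 := by rw [hWdef]; exact zpow_ne_zero _ hq
    have hY2 : Y ^ 2 = qq ^ ((2 * dd : ℕ) : ℤ) := by
      rw [hYdef, ← zpow_natCast (qq ^ ((dd:ℕ):ℤ)) 2, ← zpow_mul]
      congr 1 <;> push_cast <;> (try ring)
    have hDD0 : DD ≠ 0 := by
      intro h0
      rw [hDDdef] at h0
      have h1 : ε * Y ^ 2 = 1 := by linear_combination -h0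
      have h2 : Y ^ 2 = ε := by
        have h3 := congrArg (ε * ·) h1
        simp only [← mul_assoc, hεε, one_mul, mul_one] at h3
        exact h3
      rw [hY2] at h2
      rcases Nat.even_or_odd (p i) with he | ho
      · rw [hεdef, he.neg_one_pow] at h2
        have := qq_zpow_eq_one h2
        omega
      · rw [hεdef, ho.neg_one_pow] at h2
        exact qq_zpow_ne_neg_one _ h2
    -- the commutator relation from `ab`
    have habrel : A * B = ε • (B * A) + (DD⁻¹) • (Φ (Kg ((((1:ℕ+):ℤ) * (d i : ℤ)) • hi i)) -
        Φ (Kg (-((((1:ℕ+):ℤ) * (d i : ℤ)) • hi i)))) := by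
      have h1 := hrel (QBBRel.ab i i 1 1)
      rw [if_pos ⟨rfl, rfl⟩] at h1
      rw [map_sub, map_smul, map_mul, map_smul, map_sub, map_mul] at h1
      have hsign : ((-1 : K) ^ ((((1:ℕ+):ℕ)) * p i * (((1:ℕ+):ℕ) * p i))) = ε := by
        simp only [PNat.one_coe, one_mul]
        rw [hεdef]
        rcases Nat.even_or_odd (p i) with he | ho
        · rw [he.neg_one_pow, (he.mul_left _).neg_one_pow]
        · rw [ho.neg_one_pow, (ho.mul ho).neg_one_pow]
      have hcK : (1 - (-1:K) ^ (((1:ℕ+):ℕ) * p i) * qi d i ^ (2 * ((1:ℕ+):ℕ)))⁻¹ = DD⁻¹ := by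
        congr 1
        rw [hDDdef, hεdef]
        simp only [PNat.one_coe, one_mul, mul_one]
        congr 1
        rw [hYdef, zpow_natCast]
        rfl
      rw [hsign, hcK] at h1
      have h2 := sub_eq_iff_eq_add.mp h1
      rw [h2, add_comm]
    -- action of the Cartan parts
    have hcast : (((1:ℕ+):ℤ) * (d i : ℤ)) • hi i = ((dd : ℕ) : ℤ) • hi i := by
      congr 1
      rw [hdd]
      push_cast
      ring
    have wKD : ∀ m : ℕ, Φ (Kg ((((1:ℕ+):ℤ) * (d i : ℤ)) • hi i)) • ((B ^ m) • v) =
        algebraMap K U (qq ^ ((dd:ℤ) * (n - 2 * (m:ℤ)))) • ((B ^ m) • v) := by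
      intro m
      rw [hcast, hKpow (hi i) dd]
      exact wtppow dd m
    have wKDinv : ∀ m : ℕ, Φ (Kg (-((((1:ℕ+):ℤ) * (d i : ℤ)) • hi i))) • ((B ^ m) • v) =
        algebraMap K U (qq ^ ((dd:ℤ) * (2 * (m:ℤ) - n))) • ((B ^ m) • v) := by
      intro m
      have h1 : -((((1:ℕ+):ℤ) * (d i : ℤ)) • hi i) = ((dd : ℕ) : ℤ) • (-hi i) := by
        rw [hcast, smul_neg]
      rw [h1, hKpow (-hi i) dd]
      exact wtmpow dd m
    -- combined action of A*B
    have hABact : ∀ m : ℕ, (A * B) • ((B ^ m) • v) =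
        algebraMap K U ε • (B • (A • ((B ^ m) • v))) +
        algebraMap K U (DD⁻¹ * (qq ^ ((dd:ℤ) * (n - 2 * (m:ℤ))) - qq ^ ((dd:ℤ) * (2 * (m:ℤ) - n)))) •
          ((B ^ m) • v) := by
      intro m
      rw [habrel, add_smul, smulK, smulK]
      congr 1
      · rw [mul_smul]
      · rw [sub_smul, wKD m, wKDinv m, ← sub_smul, ← map_sub, φmul]
    -- the recursive scalars with closed form
    obtain ⟨Z, hZdef⟩ : ∃ f : ℕ → K, f = fun m : ℕ => qq ^ ((dd:ℤ) * ((m:ℤ) + 1)) := ⟨_, rfl⟩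
    have hZm : ∀ m : ℕ, Z m = qq ^ ((dd:ℤ) * ((m:ℤ) + 1)) := fun m => by rw [hZdef]
    have hZ0 : ∀ m, Z m ≠ 0 := fun m => by rw [hZm]; exact zpow_ne_zero _ hq
    obtain ⟨G, hGdef⟩ : ∃ f : ℕ → K, f = fun m : ℕ => -(ε^(m+1) * W^2 * Y^2 * (Z m)^2
        + ε^(m+2) * (Z m)^2 - W^2 * Y^2 - ε * (Z m)^4) := ⟨_, rfl⟩
    have hGm : ∀ m : ℕ, G m = -(ε^(m+1) * W^2 * Y^2 * (Z m)^2 + ε^(m+2) * (Z m)^2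
        - W^2 * Y^2 - ε * (Z m)^4) := fun m => by rw [hGdef]
    have key : ∀ m : ℕ, ∃ c : K, A • ((B ^ (m+1)) • v) = algebraMap K U c • ((B ^ m) • v) ∧
        c * DD^2 * W * (Z m)^2 = G m := by
      intro m
      induction m with
      | zero =>
        refine ⟨DD⁻¹ * (qq ^ ((dd:ℤ) * (n - 2 * ((0:ℕ):ℤ))) - qq ^ ((dd:ℤ) * (2 * ((0:ℕ):ℤ) - n))), ?_, ?_⟩
        · have h1 : (B ^ (0+1)) • v = B • ((B ^ 0) • v) := by rw [pow_succ', mul_smul]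
          rw [h1, ← mul_smul, hABact 0]
          have h2 : A • ((B ^ 0) • v) = 0 := by
            rw [pow_zero, one_smul]
            exact hhwA i 1
          rw [h2, smul_zero, smul_zero, zero_add]
        · -- scalar identity at 0
          have hX1 : qq ^ ((dd:ℤ) * (n - 2 * ((0:ℕ):ℤ))) = W := by
            rw [hWdef]; congr 1 <;> push_cast <;> (try ring)
          have hX2 : qq ^ ((dd:ℤ) * (2 * ((0:ℕ):ℤ) - n)) * W = 1 := by
            rw [hWdef, ← zpow_add₀ hq, show (dd:ℤ) * (2 * ((0:ℕ):ℤ) - n) + (dd:ℤ) * n = 0 by push_cast; ring, zpow_zero]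
          have hZY : Z 0 = Y := by
            rw [hZm, hYdef]; congr 1 <;> push_cast <;> (try ring)
          have hDDinv : DD * DD⁻¹ = 1 := mul_inv_cancel₀ hDD0
          rw [hGm, hZY, hX1]
          linear_combination ((W - qq ^ ((dd:ℤ) * (2 * ((0:ℕ):ℤ) - n))) * DD * W * Y^2) * hDDinv -
            (DD * Y^2) * hX2 + (W^2 * Y^2 - Y^2) * hDDdef + (Y^2) * hεε
      | succ k ih =>
        obtain ⟨c, hc1, hc2⟩ := ih
        refine ⟨ε * c + DD⁻¹ * (qq ^ ((dd:ℤ) * (n - 2 * ((k+1:ℕ):ℤ))) -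
          qq ^ ((dd:ℤ) * (2 * ((k+1:ℕ):ℤ) - n))), ?_, ?_⟩
        · have h1 : (B ^ (k+2)) • v = B • ((B ^ (k+1)) • v) := by rw [pow_succ', mul_smul]
          rw [h1, ← mul_smul, hABact (k+1)]
          rw [hc1]
          rw [φcomm]
          have h3 : B • ((B ^ k) • v) = (B ^ (k+1)) • v := by rw [pow_succ', mul_smul]
          rw [h3, φmul, ← add_smul, ← map_add]
        · -- scalar identity at k+1
          have hX1 : qq ^ ((dd:ℤ) * (n - 2 * ((k+1:ℕ):ℤ))) * (Z k)^2 = W := by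
            rw [hZm, hWdef, ← zpow_natCast (qq ^ ((dd:ℤ) * ((k:ℤ)+1))) 2, ← zpow_mul, ← zpow_add₀ hq]
            congr 1 <;> push_cast <;> (try ring)
          have hX2 : qq ^ ((dd:ℤ) * (2 * ((k+1:ℕ):ℤ) - n)) * W = (Z k)^2 := by
            rw [hZm, hWdef, ← zpow_natCast (qq ^ ((dd:ℤ) * ((k:ℤ)+1))) 2, ← zpow_mul, ← zpow_add₀ hq]
            congr 1 <;> push_cast <;> (try ring)
          have hZs : Z (k+1) = Z k * Y := by
            rw [hZm, hZm, hYdef, ← zpow_add₀ hq]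
            congr 1 <;> push_cast <;> (try ring)
          have hDDinv : DD * DD⁻¹ = 1 := mul_inv_cancel₀ hDD0
          rw [hGm, hZs]
          rw [hGm] at hc2
          linear_combination (ε * Y^2) * hc2 +
            ((qq ^ ((dd:ℤ) * (n - 2 * ((k+1:ℕ):ℤ))) - qq ^ ((dd:ℤ) * (2 * ((k+1:ℕ):ℤ) - n))) * DD * W * (Z k)^2 * Y^2) * hDDinv +
            (DD * W * Y^2) * hX1 - (DD * Y^2 * (Z k)^2) * hX2 +
            ((Z k)^4 * Y^2) * hεε + ((W^2 - (Z k)^4) * Y^2) * hDDdef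
    -- minimal r with B^r • v = 0
    have hex : ∃ r : ℕ, (B ^ r) • v = 0 := hlocnil i hre v
    have hfind0 : Nat.find hex ≠ 0 := by
      intro h0
      have h1 := Nat.find_spec hex
      rw [h0, pow_zero, one_smul] at h1
      exact hv0 h1
    obtain ⟨m, hm⟩ : ∃ m, Nat.find hex = m + 1 := ⟨Nat.find hex - 1, by omega⟩
    have hzero : (B ^ (m+1)) • v = 0 := by rw [← hm]; exact Nat.find_spec hex
    have hnz : (B ^ m) • v ≠ 0 := Nat.find_min hex (by omega)
    obtain ⟨c, hc1, hc2⟩ := key m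
    have hc0 : c = 0 := by
      by_contra hcne
      apply hnz
      apply φcancel c _ hcne
      rw [← hc1, hzero, smul_zero]
    rw [hc0, zero_mul, zero_mul, zero_mul, hGm] at hc2
    have hG0 : ε^(m+1) * W^2 * Y^2 * (Z m)^2 + ε^(m+2) * (Z m)^2 - W^2 * Y^2 - ε * (Z m)^4 = 0 := by
      linear_combination hc2
    have hZr : (Z m)^2 = qq ^ (2*(dd:ℤ)*((m:ℤ)+1)) := by
      rw [hZm, ← zpow_natCast (qq ^ ((dd:ℤ)*((m:ℤ)+1))) 2, ← zpow_mul]; congr 1; ring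
    have hG2 : W^2 * Y^2 = qq ^ (2*(dd:ℤ)*n + 2*(dd:ℤ)) := by
      rw [hWdef, hYdef, ← zpow_natCast (qq ^ ((dd:ℤ)*n)) 2, ← zpow_mul,
        ← zpow_natCast (qq ^ ((dd:ℕ):ℤ)) 2, ← zpow_mul, ← zpow_add₀ hq]
      congr 1; push_cast; ring
    have hCq1 : (Z m)^2 ≠ 1 := by
      rw [hZr]; intro h
      have := qq_zpow_eq_one h
      have : (2*(dd:ℤ)) * ((m:ℤ)+1) ≠ 0 := by positivity
      omega
    have hCqm1 : (Z m)^2 ≠ -1 := by rw [hZr]; exact qq_zpow_ne_neg_one _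
    have hdd0 : (2*(dd:ℤ)) ≠ 0 := by positivity
    -- deduce n = m from W²Y² = (Z m)²
    have hfinal : W^2 * Y^2 = (Z m)^2 → n = (m:ℤ) := by
      intro hWZ
      rw [hG2, hZr] at hWZ
      have h1 := qq_zpow_inj hWZ
      have h2 : (2*(dd:ℤ)) * n = (2*(dd:ℤ)) * (m:ℤ) := by ring_nf; ring_nf at h1; omega
      exact mul_left_cancel₀ hdd0 h2
    rcases Nat.even_or_odd (p i) with he | ho
    · -- even parity: ε = 1
      have hεv : ε = 1 := by rw [hεdef, he.neg_one_pow]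
      rw [hεv] at hG0
      simp only [one_pow, one_mul] at hG0
      have hfac : ((Z m)^2 - 1) * (W^2 * Y^2 - (Z m)^2) = 0 := by linear_combination hG0
      rcases mul_eq_zero.mp hfac with h | h
      · exact absurd (sub_eq_zero.mp h) hCq1
      · have hnm := hfinal (sub_eq_zero.mp h)
        constructor
        · rw [hnm]; positivity
        · intro hp1
          rw [hp1] at he
          exact absurd he (by decide)
    · -- odd parity: ε = -1
      have hεv : ε = -1 := by rw [hεdef, ho.neg_one_pow]
      rcases Nat.even_or_odd (m+1) with hre2 | hro
      · exfalso
        have h1 : ε^(m+1) = 1 := by rw [hεv]; exact hre2.neg_one_pow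
        have h2 : ε^(m+2) = -1 := by rw [hεv]; exact (hre2.add_one).neg_one_pow
        rw [h1, h2, hεv] at hG0
        have hfac : ((Z m)^2 - 1) * (W^2 * Y^2 + (Z m)^2) = 0 := by linear_combination hG0
        rcases mul_eq_zero.mp hfac with h | h
        · exact absurd (sub_eq_zero.mp h) hCq1
        · have hWZ : W^2 * Y^2 = -(Z m)^2 := by linear_combination h
          rw [hG2, hZr] at hWZ
          exact qq_zpow_ne_neg_zpow _ _ hWZ
      · have h1 : ε^(m+1) = -1 := by rw [hεv]; exact hro.neg_one_pow
        have h2 : ε^(m+2) = 1 := by rw [hεv]; exact (hro.add_one).neg_one_pow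
        rw [h1, h2, hεv] at hG0
        have hfac : ((Z m)^2 + 1) * ((Z m)^2 - W^2 * Y^2) = 0 := by linear_combination hG0
        rcases mul_eq_zero.mp hfac with h | h
        · have : (Z m)^2 = -1 := by linear_combination h
          exact absurd this hCqm1
        · have hnm := hfinal (by linear_combination -h)
          obtain ⟨k, hk⟩ := hro
          have hmk : m = 2 * k := by omega
          constructor
          · rw [hnm]; positivity
          · intro _
            rw [hnm, hmk]
            exact ⟨(k:ℤ), by push_cast; ring⟩
  refine ⟨main, ⟨?_, fun i h2 => (main i h2).2⟩⟩
  intro i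
  rcases hcartan i with h2 | h0
  · exact (main i h2).1
  · exact him i h0
end
end
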